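/- For every m ≥ 1, the m-generated free weakly associative relation algebra, i.e. the free algebra Fr_m(RRA_{R,S}) of the class of algebras of subrelations of a reflexive symmetric relation, is not atomic: there is a relation-type term τ over m variables such that τ = 0 is not RRA_{R,S}-valid, yet no atom of Fr_m(RRA_{R,S}) lies below [τ]. -/

import Mathlib

/-- Relation-type terms over `m` variables. -/
inductive RTerm (m : ℕ) : Type
  | var : Fin m → RTerm m
  | zero : RTerm m
  | one : RTerm m
  | id : RTerm m
  | add : RTerm m → RTerm m → RTerm m
  | mul : RTerm m → RTerm m → RTerm m
  | neg : RTerm m → RTerm m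
  | comp : RTerm m → RTerm m → RTerm m
  | conv : RTerm m → RTerm m
  deriving DecidableEq

/-- The diversity term `0′ = 1 · −1′`. -/
def RTerm.div {m : ℕ} : RTerm m := .mul .one (.neg .id)

/-- The list `D_m = {1′, x_0, …, x_{m−1}}`. -/
def listD (m : ℕ) : List (RTerm m) :=
  RTerm.id :: List.ofFn (fun i : Fin m => RTerm.var i)

/-- Signed product `Y^α`, where the sign of `x ∈ Y` is positive iff `x ∈ S`
(the empty product is `1`). -/
def sprodBy {m : ℕ} (Y S : List (RTerm m)) : RTerm m :=
  (Y.map (fun x => if x ∈ S then x else RTerm.neg x)).foldr RTerm.mul RTerm.one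

/-- The one-step closure `CY = {x;y : x,y ∈ Y} ∪ {x˘ : x ∈ Y}`. -/
def listC {m : ℕ} (Y : List (RTerm m)) : List (RTerm m) :=
  (Y.flatMap fun x => Y.map fun y => RTerm.comp x y) ++ Y.map RTerm.conv

/-- The normal forms `F_n^m`: `F_0^m = {D_m^β}`,
`F_{n+1}^m = {D_m^β · (C F_n^m)^α}`. -/
def forms (m : ℕ) : ℕ → List (RTerm m)
  | 0 => (listD m).sublists.map (sprodBy (listD m))
  | n + 1 =>
      (listD m).sublists.flatMap fun S =>
        (listC (forms m n)).sublists.map fun T =>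
          RTerm.mul (sprodBy (listD m) S) (sprodBy (listC (forms m n)) T)

/-- A Boolean algebra with operators of relation type: a Boolean algebra with a
distinguished identity element, a binary composition and a unary converse that
are normal and additive in each argument. -/
structure RelBAO (B : Type*) [BooleanAlgebra B] where
  rid : B
  comp : B → B → B
  conv : B → B
  comp_bot_left : ∀ x, comp ⊥ x = ⊥
  comp_bot_right : ∀ x, comp x ⊥ = ⊥
  comp_sup_left : ∀ x y z, comp (x ⊔ y) z = comp x z ⊔ comp y z
  comp_sup_right : ∀ x y z, comp x (y ⊔ z) = comp x y ⊔ comp x z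
  conv_bot : conv ⊥ = ⊥
  conv_sup : ∀ x y, conv (x ⊔ y) = conv x ⊔ conv y

/-- Evaluation of a relation-type term in a Boolean algebra with operators. -/
def beval {B : Type*} [BooleanAlgebra B] (A : RelBAO B) {m : ℕ} (v : Fin m → B) :
    RTerm m → B
  | .var i => v i
  | .zero => ⊥
  | .one => ⊤
  | .id => A.rid
  | .add a b => beval A v a ⊔ beval A v b
  | .mul a b => beval A v a ⊓ beval A v b
  | .neg a => (beval A v a)ᶜ
  | .comp a b => A.comp (beval A v a) (beval A v b)
  | .conv a => A.conv (beval A v a)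

/-- Relativized interpretation of relation-type terms inside a unit `W ⊆ U × U`. -/
def rint {U : Type*} (W : Set (U × U)) {m : ℕ} (v : Fin m → Set (U × U)) :
    RTerm m → Set (U × U)
  | .var i => v i
  | .zero => ∅
  | .one => W
  | .id => {p | p ∈ W ∧ p.1 = p.2}
  | .add a b => rint W v a ∪ rint W v b
  | .mul a b => rint W v a ∩ rint W v b
  | .neg a => W \ rint W v a
  | .comp a b => {p | p ∈ W ∧ ∃ c, (p.1, c) ∈ rint W v a ∧ (c, p.2) ∈ rint W v b}
  | .conv a => {p | p ∈ W ∧ (p.2, p.1) ∈ rint W v a}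

/-- The two relation properties `R` (reflexive) and `S` (symmetric). -/
inductive RS | R | S
  deriving DecidableEq

/-- `W` is an `H`-relation: reflexive on its base if `R ∈ H`,
symmetric if `S ∈ H`. -/
def IsHRel (H : Set RS) {U : Type*} (W : Set (U × U)) : Prop :=
  (RS.R ∈ H → ∀ a b : U, (a, b) ∈ W → (a, a) ∈ W ∧ (b, b) ∈ W) ∧
  (RS.S ∈ H → ∀ a b : U, (a, b) ∈ W → (b, a) ∈ W)

/-- The equation `τ = σ` is `RRA_H`-valid. -/
def Valid (H : Set RS) {m : ℕ} (τ σ : RTerm m) : Prop :=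
  ∀ (U : Type) (W : Set (U × U)) (v : Fin m → Set (U × U)),
    IsHRel H W → (∀ i, v i ⊆ W) → rint W v τ = rint W v σ

/-- `[σ]` is an atom of the free algebra `Fr_m(RRA_H)`. -/
def IsAtomT (H : Set RS) {m : ℕ} (σ : RTerm m) : Prop :=
  ¬ Valid H σ .zero ∧
    ∀ ρ : RTerm m, Valid H (σ.mul ρ) .zero ∨ Valid H (σ.mul (.neg ρ)) .zero

/-- `e1 = 1′·−(0′;0′)`. -/
def termE1 {m : ℕ} : RTerm m := .mul .id (.neg (.comp .div .div))
/-- `e2 = 1′·(0′;0′)`. -/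
def termE2 {m : ℕ} : RTerm m := .mul .id (.comp .div .div)
/-- `m2 = 0′·−(0′;0′)`. -/
def termM2 {m : ℕ} : RTerm m := .mul .div (.neg (.comp .div .div))
/-- `m3 = 0′·(0′;0′)`. -/
def termM3 {m : ℕ} : RTerm m := .mul .div (.comp .div .div)
/-- `t = 0′·0′˘·((0′·0′˘);(0′·0′˘))`. -/
def termT {m : ℕ} : RTerm m :=
  .mul (.mul .div (.conv .div)) (.comp (.mul .div (.conv .div)) (.mul .div (.conv .div)))

namespace Stmt10Aux

/-- Modal/composition depth of a term. -/
def dp {m : ℕ} : RTerm m → ℕ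
  | .var _ => 0
  | .zero => 0
  | .one => 0
  | .id => 0
  | .add a b => max (dp a) (dp b)
  | .mul a b => max (dp a) (dp b)
  | .neg a => dp a
  | .comp a b => max (dp a) (dp b) + 1
  | .conv a => dp a + 1

/-- `Aterm φ k` holds at a loop `(x,x)` iff some vertex within walking
distance `k` of `x` has its loop in `φ`. -/
def Aterm {m : ℕ} (φ : RTerm m) : ℕ → RTerm m
  | 0 => .mul .id φ
  | k+1 => .mul .id (.comp (.comp .one (Aterm φ k)) .one)

lemma rint_subset {U : Type*} {m : ℕ} (W : Set (U × U)) (v : Fin m → Set (U × U))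
    (hv : ∀ i, v i ⊆ W) : ∀ ρ : RTerm m, rint W v ρ ⊆ W := by
  intro ρ
  induction ρ with
  | var i => exact hv i
  | zero => intro p hp; exact absurd hp (Set.notMem_empty p)
  | one => exact fun p hp => hp
  | id => intro p hp; exact hp.1
  | add a b ha hb => exact Set.union_subset ha hb
  | mul a b ha hb => intro p hp; exact ha hp.1
  | neg a ha => intro p hp; exact hp.1
  | comp a b ha hb => intro p hp; exact hp.1
  | conv a ha => intro p hp; exact hp.1


variable {U : Type} {m : ℕ}

/-- The twisted product ("blow-up") of a unit `W` along `ℤ`. -/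
def liftW (W : Set (U × U)) : Set ((U × ℤ) × (U × ℤ)) :=
  {q | (q.1.1, q.2.1) ∈ W ∧ (q.1.1 = q.2.1 → q.1.2 = q.2.2) ∧
      (q.1.1 ≠ q.2.1 → (q.1.2 - q.2.2).natAbs ≤ 1)}

/-- Lifted valuation. -/
def liftV (W : Set (U × U)) (v : Fin m → Set (U × U)) :
    Fin m → Set ((U × ℤ) × (U × ℤ)) :=
  fun i => {q | q ∈ liftW W ∧ (q.1.1, q.2.1) ∈ v i}

lemma liftW_mem_base {W : Set (U × U)} {q : (U × ℤ) × (U × ℤ)}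
    (h : q ∈ liftW W) : (q.1.1, q.2.1) ∈ W := h.1

lemma liftW_symm {W : Set (U × U)} (hH : IsHRel {RS.R, RS.S} W)
    {q : (U × ℤ) × (U × ℤ)} (h : q ∈ liftW W) : (q.2, q.1) ∈ liftW W := by
  obtain ⟨h1, h2, h3⟩ := h
  refine ⟨hH.2 (by simp) _ _ h1, fun he => (h2 he.symm).symm, fun hne => ?_⟩
  have h4 := h3 (fun he => hne he.symm)
  show (q.2.2 - q.1.2).natAbs ≤ 1
  omega

lemma liftW_loop_left {W : Set (U × U)} (hH : IsHRel {RS.R, RS.S} W)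
    {q : (U × ℤ) × (U × ℤ)} (h : q ∈ liftW W) : (q.1, q.1) ∈ liftW W :=
  ⟨(hH.1 (by simp) _ _ h.1).1, fun _ => rfl, fun hne => absurd rfl hne⟩

lemma liftW_loop_right {W : Set (U × U)} (hH : IsHRel {RS.R, RS.S} W)
    {q : (U × ℤ) × (U × ℤ)} (h : q ∈ liftW W) : (q.2, q.2) ∈ liftW W :=
  ⟨(hH.1 (by simp) _ _ h.1).2, fun _ => rfl, fun hne => absurd rfl hne⟩

lemma lift_isH {W : Set (U × U)} (hH : IsHRel {RS.R, RS.S} W) :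
    IsHRel {RS.R, RS.S} (liftW W) :=
  ⟨fun _ a b hab => ⟨liftW_loop_left hH hab, liftW_loop_right hH hab⟩,
   fun _ a b hab => liftW_symm hH hab⟩

lemma liftV_subset (W : Set (U × U)) (v : Fin m → Set (U × U)) :
    ∀ i, liftV W v i ⊆ liftW W := fun _ _ h => h.1

lemma liftW_level {W : Set (U × U)} {q : (U × ℤ) × (U × ℤ)} (h : q ∈ liftW W) :
    q.1.2.natAbs ≤ q.2.2.natAbs + 1 ∧ q.2.2.natAbs ≤ q.1.2.natAbs + 1 := by
  obtain ⟨_, h2, h3⟩ := h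
  by_cases he : q.1.1 = q.2.1
  · rw [h2 he]; omega
  · have := h3 he; omega

/-- The key bounded-morphism lemma: relativized interpretation in the blow-up
is the preimage of the interpretation downstairs. -/
lemma lift_rint {W : Set (U × U)} {v : Fin m → Set (U × U)}
    (hH : IsHRel {RS.R, RS.S} W) (hv : ∀ i, v i ⊆ W) :
    ∀ ρ : RTerm m, rint (liftW W) (liftV W v) ρ =
      {q | q ∈ liftW W ∧ (q.1.1, q.2.1) ∈ rint W v ρ} := by
  intro ρ
  induction ρ with
  | var i => rfl
  | zero =>
      ext q; simp only [rint, Set.mem_empty_iff_false, Set.mem_setOf_eq, false_iff]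
      rintro ⟨-, h⟩; exact h
  | one =>
      ext q; simp only [rint, Set.mem_setOf_eq]
      exact ⟨fun h => ⟨h, h.1⟩, fun h => h.1⟩
  | id =>
      ext q
      simp only [rint, Set.mem_setOf_eq]
      constructor
      · rintro ⟨hq, he⟩
        exact ⟨hq, hq.1, congrArg Prod.fst he⟩
      · rintro ⟨hq, -, he⟩
        refine ⟨hq, ?_⟩
        have := hq.2.1 he
        exact Prod.ext he this
  | add a b ha hb =>
      ext q
      simp only [rint, Set.mem_union, ha, hb, Set.mem_setOf_eq]
      tauto
  | mul a b ha hb =>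
      ext q
      simp only [rint, Set.mem_inter_iff, ha, hb, Set.mem_setOf_eq]
      tauto
  | neg a ha =>
      ext q
      simp only [rint, Set.mem_diff, ha, Set.mem_setOf_eq]
      constructor
      · rintro ⟨hq, hn⟩
        exact ⟨hq, hq.1, fun hx => hn ⟨hq, hx⟩⟩
      · rintro ⟨hq, -, hn⟩
        exact ⟨hq, fun hx => hn hx.2⟩
  | conv a ha =>
      ext q
      simp only [rint, ha, Set.mem_setOf_eq]
      constructor
      · rintro ⟨hq, hs, hx⟩
        exact ⟨hq, hq.1, hx⟩
      · rintro ⟨hq, -, hx⟩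
        exact ⟨hq, liftW_symm hH hq, hx⟩
  | comp a b ha hb =>
      ext q
      simp only [rint, ha, hb, Set.mem_setOf_eq]
      constructor
      · rintro ⟨hq, c, ⟨hc1, hc1'⟩, ⟨hc2, hc2'⟩⟩
        exact ⟨hq, hq.1, c.1, hc1', hc2'⟩
      · rintro ⟨hq, -, c, hc1, hc2⟩
        refine ⟨hq, ?_⟩
        by_cases hcx : c = q.1.1
        · subst hcx
          exact ⟨q.1, ⟨⟨rint_subset W v hv a hc1, fun _ => rfl,
            fun hne => absurd rfl hne⟩, hc1⟩, ⟨hq, hc2⟩⟩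
        · by_cases hcy : c = q.2.1
          · subst hcy
            exact ⟨q.2, ⟨hq, hc1⟩, ⟨⟨rint_subset W v hv b hc2, fun _ => rfl,
              fun hne => absurd rfl hne⟩, hc2⟩⟩
          · refine ⟨(c, q.1.2), ⟨⟨rint_subset W v hv a hc1,
              fun he => absurd he.symm hcx, fun _ => by simp⟩, hc1⟩,
              ⟨⟨rint_subset W v hv b hc2, fun he => absurd he hcy, fun _ => ?_⟩, hc2⟩⟩
            simp only
            by_cases he : q.1.1 = q.2.1
            · rw [hq.2.1 he]; simp
            · exact hq.2.2 he


section Amachinery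

variable {U' : Type} {m : ℕ} (W' : Set (U' × U')) (v' : Fin m → Set (U' × U'))

lemma A_sub_id {φ : RTerm m} {k : ℕ} {q : U' × U'}
    (h : q ∈ rint W' v' (Aterm φ k)) : q ∈ W' ∧ q.1 = q.2 := by
  cases k with
  | zero => exact h.1
  | succ k => exact h.1

lemma A_intro {φ : RTerm m} {k : ℕ} {x c : U'}
    (hxx : (x, x) ∈ W') (hxc : (x, c) ∈ W') (hcx : (c, x) ∈ W')
    (hc : (c, c) ∈ rint W' v' (Aterm φ k)) :
    (x, x) ∈ rint W' v' (Aterm φ (k + 1)) :=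
  ⟨⟨hxx, rfl⟩, ⟨hxx, c, ⟨hxc, c, hxc, hc⟩, hcx⟩⟩

lemma A_succ_elim {φ : RTerm m} {k : ℕ} {x : U'}
    (h : (x, x) ∈ rint W' v' (Aterm φ (k + 1))) :
    ∃ c, (x, c) ∈ W' ∧ (c, c) ∈ rint W' v' (Aterm φ k) := by
  obtain ⟨-, -, c', h1, -⟩ := h
  obtain ⟨hW1, c₂, -, hc3⟩ := h1
  have he : c₂ = c' := (A_sub_id W' v' hc3).2
  subst he
  exact ⟨c₂, hW1, hc3⟩

lemma A_mono {φ : RTerm m} {k : ℕ} :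
    rint W' v' (Aterm φ k) ⊆ rint W' v' (Aterm φ (k + 1)) := by
  intro q hq
  obtain ⟨hW, he⟩ := A_sub_id W' v' hq
  obtain ⟨x, y⟩ := q
  simp only at he
  subst he
  exact A_intro W' v' hW hW hW hq

lemma A_le {φ : RTerm m} {j k : ℕ} (h : j ≤ k) :
    rint W' v' (Aterm φ j) ⊆ rint W' v' (Aterm φ k) := by
  induction k with
  | zero => have : j = 0 := by omega
            subst this; exact fun q h => h
  | succ k ih =>
      rcases Nat.le_succ_iff.mp h with h' | h'
      · exact fun q hq => A_mono W' v' (ih h' hq)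
      · subst h'; exact fun q h => h

lemma A_elim_nbr (hH' : IsHRel {RS.R, RS.S} W') {φ : RTerm m} :
    ∀ (k : ℕ) (x : U'), (x, x) ∈ rint W' v' (Aterm φ k) →
      ∃ z, (z, z) ∈ rint W' v' (Aterm φ 0) ∧
        (z = x ∨ ∃ y, y ≠ z ∧ (z, y) ∈ W') := by
  intro k
  induction k with
  | zero => exact fun x h => ⟨x, h, Or.inl rfl⟩
  | succ k ih =>
      intro x h
      obtain ⟨c, hxc, hc⟩ := A_succ_elim W' v' h
      by_cases hcx : c = x
      · subst hcx; exact ih c hc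
      · obtain ⟨z, hz, hor⟩ := ih c hc
        refine ⟨z, hz, ?_⟩
        rcases hor with rfl | ⟨y, hy, hzy⟩
        · exact Or.inr ⟨x, fun he => hcx he.symm, hH'.2 (by simp) _ _ hxc⟩
        · exact Or.inr ⟨y, hy, hzy⟩

end Amachinery

section Alevel

variable {U : Type} {m : ℕ} {W : Set (U × U)} (v' : Fin m → Set ((U × ℤ) × (U × ℤ)))

lemma A_elim_level {φ : RTerm m} :
    ∀ (k : ℕ) (x : U × ℤ), (x, x) ∈ rint (liftW W) v' (Aterm φ k) →
      ∃ z : U × ℤ, (z, z) ∈ rint (liftW W) v' (Aterm φ 0) ∧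
        x.2.natAbs ≤ z.2.natAbs + k := by
  intro k
  induction k with
  | zero => exact fun x h => ⟨x, h, by omega⟩
  | succ k ih =>
      intro x h
      obtain ⟨c, hxc, hc⟩ := A_succ_elim _ _ h
      obtain ⟨z, hz, hb⟩ := ih c hc
      have hlev : x.2.natAbs ≤ c.2.natAbs + 1 := (liftW_level hxc).1
      exact ⟨z, hz, by omega⟩

lemma walkUp (hH : IsHRel {RS.R, RS.S} W) {φ : RTerm m} :
    ∀ (n : ℕ) (x y : U) (s : ℤ), x ≠ y → (x, y) ∈ W →
      (∀ e : U, (e = x ∨ e = y) →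
        (((e, s + n), (e, s + n)) : (U × ℤ) × (U × ℤ)) ∈ rint (liftW W) v' (Aterm φ 0)) →
      (((x, s), (x, s)) : (U × ℤ) × (U × ℤ)) ∈ rint (liftW W) v' (Aterm φ n) := by
  intro n
  induction n with
  | zero =>
      intro x y s hxy hW h
      have := h x (Or.inl rfl)
      simpa using this
  | succ n ih =>
      intro x y s hxy hW h
      have hyx : (y, x) ∈ W := hH.2 (by simp) _ _ hW
      have hxx : (x, x) ∈ W := (hH.1 (by simp) _ _ hW).1
      have hyy : (y, y) ∈ W := (hH.1 (by simp) _ _ hW).2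
      have hedge : (((x, s), (y, s + 1)) : (U × ℤ) × (U × ℤ)) ∈ liftW W :=
        ⟨hW, fun he => absurd he hxy, fun _ => by simp⟩
      have hedge' : (((y, s + 1), (x, s)) : (U × ℤ) × (U × ℤ)) ∈ liftW W :=
        ⟨hyx, fun he => absurd he.symm hxy, fun _ => by
          show ((s + 1) - s).natAbs ≤ 1; omega⟩
      have hloop : (((x, s), (x, s)) : (U × ℤ) × (U × ℤ)) ∈ liftW W :=
        ⟨hxx, fun _ => rfl, fun hne => absurd rfl hne⟩
      refine A_intro _ _ hloop hedge hedge' ?_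
      refine ih y x (s + 1) (fun he => hxy he.symm) hyx ?_
      intro e he
      have harith : s + 1 + (n : ℤ) = s + ((n : ℕ) + 1 : ℕ) := by push_cast; ring
      rw [harith]
      exact h e he.symm
end Alevel

section Locality

variable {U : Type} {m : ℕ}

/-- Locality: a term of depth `dp ρ` evaluated at a pair whose levels are small
cannot see changes of the valuation made at pairs whose levels are both large. -/
lemma loc (W : Set (U × U)) (D : ℕ) (v₁ v₂ : Fin m → Set ((U × ℤ) × (U × ℤ)))
    (hv₁ : ∀ i, v₁ i ⊆ liftW W) (hv₂ : ∀ i, v₂ i ⊆ liftW W)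
    (hagree : ∀ i q, (q.1.2.natAbs ≤ D ∨ q.2.2.natAbs ≤ D) → (q ∈ v₁ i ↔ q ∈ v₂ i)) :
    ∀ (ρ : RTerm m) (q : (U × ℤ) × (U × ℤ)),
      q.1.2.natAbs + dp ρ ≤ D → q.2.2.natAbs + dp ρ ≤ D →
      (q ∈ rint (liftW W) v₁ ρ ↔ q ∈ rint (liftW W) v₂ ρ) := by
  intro ρ
  induction ρ with
  | var i => exact fun q h1 h2 => hagree i q (Or.inl (by simpa [dp] using h1))
  | zero => exact fun q _ _ => Iff.rfl
  | one => exact fun q _ _ => Iff.rfl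
  | id => exact fun q _ _ => Iff.rfl
  | add a b ha hb =>
      intro q h1 h2
      have da : dp a ≤ dp (RTerm.add a b) := by simp [dp]
      have db : dp b ≤ dp (RTerm.add a b) := by simp [dp]
      exact Set.mem_union _ _ _ |>.trans <| Iff.trans
        (or_congr (ha q (by omega) (by omega)) (hb q (by omega) (by omega)))
        (Set.mem_union _ _ _).symm
  | mul a b ha hb =>
      intro q h1 h2
      have da : dp a ≤ dp (RTerm.mul a b) := by simp [dp]
      have db : dp b ≤ dp (RTerm.mul a b) := by simp [dp]
      exact Set.mem_inter_iff _ _ _ |>.trans <| Iff.trans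
        (and_congr (ha q (by omega) (by omega)) (hb q (by omega) (by omega)))
        (Set.mem_inter_iff _ _ _).symm
  | neg a ha =>
      intro q h1 h2
      have da : dp a = dp (RTerm.neg a) := rfl
      exact Set.mem_diff _ |>.trans <| Iff.trans
        (and_congr Iff.rfl (not_congr (ha q (by omega) (by omega))))
        (Set.mem_diff _).symm
  | conv a ha =>
      intro q h1 h2
      have da : dp a + 1 = dp (RTerm.conv a) := rfl
      constructor
      · rintro ⟨hq, hx⟩
        exact ⟨hq, (ha (q.2, q.1) (show q.2.2.natAbs + dp a ≤ D by omega)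
          (show q.1.2.natAbs + dp a ≤ D by omega)).mp hx⟩
      · rintro ⟨hq, hx⟩
        exact ⟨hq, (ha (q.2, q.1) (show q.2.2.natAbs + dp a ≤ D by omega)
          (show q.1.2.natAbs + dp a ≤ D by omega)).mpr hx⟩
  | comp a b ha hb =>
      intro q h1 h2
      have da : dp a + 1 ≤ dp (RTerm.comp a b) := by simp [dp]
      have db : dp b + 1 ≤ dp (RTerm.comp a b) := by simp [dp]
      constructor
      · rintro ⟨hq, c, hc1, hc2⟩
        have hcW : ((q.1, c) : (U × ℤ) × (U × ℤ)) ∈ liftW W :=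
          rint_subset _ _ hv₁ a hc1
        have hlev : c.2.natAbs ≤ q.1.2.natAbs + 1 := (liftW_level hcW).2
        exact ⟨hq, c, (ha (q.1, c) (show q.1.2.natAbs + dp a ≤ D by omega)
            (show c.2.natAbs + dp a ≤ D by omega)).mp hc1,
          (hb (c, q.2) (show c.2.natAbs + dp b ≤ D by omega)
            (show q.2.2.natAbs + dp b ≤ D by omega)).mp hc2⟩
      · rintro ⟨hq, c, hc1, hc2⟩
        have hcW : ((q.1, c) : (U × ℤ) × (U × ℤ)) ∈ liftW W :=
          rint_subset _ _ hv₂ a hc1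
        have hlev : c.2.natAbs ≤ q.1.2.natAbs + 1 := (liftW_level hcW).2
        exact ⟨hq, c, (ha (q.1, c) (show q.1.2.natAbs + dp a ≤ D by omega)
            (show c.2.natAbs + dp a ≤ D by omega)).mpr hc1,
          (hb (c, q.2) (show c.2.natAbs + dp b ≤ D by omega)
            (show q.2.2.natAbs + dp b ≤ D by omega)).mpr hc2⟩

end Locality

end Stmt10Aux

open Stmt10Aux in
/-- for `m ≥ 1`, the free weakly associative relation algebra
`Fr_m(RRA_{R,S})` is not atomic: some nonzero `[τ]` has no atom below it. -/
theorem stmt_10 (m : ℕ) (hm : 1 ≤ m) :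
    ∃ τ : RTerm m, ¬ Valid {RS.R, RS.S} τ .zero ∧
      ∀ σ : RTerm m, IsAtomT {RS.R, RS.S} σ →
        ¬ Valid {RS.R, RS.S} (σ.mul τ) σ := by
  
  classical
  refine ⟨termT, ?_, ?_⟩
  · -- `t` is nonzero: witness on the complete graph on 3 points
    intro h
    set v3 : Fin m → Set (Fin 3 × Fin 3) := fun _ => ∅ with hv3
    have hH3 : IsHRel {RS.R, RS.S} (Set.univ : Set (Fin 3 × Fin 3)) :=
      ⟨fun _ a b _ => ⟨trivial, trivial⟩, fun _ a b _ => trivial⟩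
    have heq := h (Fin 3) Set.univ v3 hH3 (fun i => Set.empty_subset _)
    have hu : ∀ p : Fin 3 × Fin 3, p.1 ≠ p.2 →
        p ∈ rint Set.univ v3 (RTerm.mul .div (.conv .div)) := by
      intro p hne
      exact ⟨⟨trivial, trivial, fun hc => hne hc.2⟩,
        trivial, trivial, trivial, fun hc => hne (hc.2).symm⟩
    have hmem : ((0, 1) : Fin 3 × Fin 3) ∈ rint Set.univ v3 termT :=
      ⟨hu (0, 1) (by decide), trivial, 2, hu (0, 2) (by decide), hu (2, 1) (by decide)⟩
    rw [heq] at hmem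
    exact hmem
  · intro σ hatom hval
    obtain ⟨hnz, hdec⟩ := hatom
    rw [Valid] at hnz
    push_neg at hnz
    obtain ⟨U, W, v, hH, hv, hne⟩ := hnz
    have hnonempty : (rint W v σ).Nonempty := by
      rw [Set.nonempty_iff_ne_empty]
      intro hc
      exact hne (by rw [hc]; rfl)
    obtain ⟨p, hp⟩ := hnonempty
    obtain ⟨a, b⟩ := p
    -- the point is in t, hence a ≠ b and (a,b) ∈ W
    have hpt : (a, b) ∈ rint W v (σ.mul termT) := by
      rw [hval U W v hH hv]; exact hp
    have hW : (a, b) ∈ W := hpt.2.1.1.1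
    have hab : a ≠ b := by
      intro hc
      exact hpt.2.1.1.2.2 ⟨hW, hc⟩
    set d := dp σ with hd
    set i0 : Fin m := ⟨0, hm⟩ with hi0
    set W' := liftW W with hW'def
    set vN := liftV W v with hvNdef
    have hH' : IsHRel {RS.R, RS.S} W' := lift_isH hH
    have hvN : ∀ i, vN i ⊆ W' := liftV_subset W v
    set Far : Set ((U × ℤ) × (U × ℤ)) :=
      {q | q ∈ W' ∧ q.1 = q.2 ∧ d < q.1.2.natAbs} with hFardef
    have hFarSub : Far ⊆ W' := fun q hq => hq.1
    set vA : Fin m → Set ((U × ℤ) × (U × ℤ)) :=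
      fun i => vN i ∪ (if i = i0 then Far else ∅) with hvAdef
    set vB : Fin m → Set ((U × ℤ) × (U × ℤ)) :=
      fun i => vN i \ (if i = i0 then Far else ∅) with hvBdef
    have hvA : ∀ i, vA i ⊆ W' := by
      intro i
      refine Set.union_subset (hvN i) ?_
      by_cases hi : i = i0 <;> simp [hi, hFarSub]
    have hvB : ∀ i, vB i ⊆ W' := fun i q hq => hvN i hq.1
    set p' : (U × ℤ) × (U × ℤ) := ((a, (0 : ℤ)), (b, (0 : ℤ))) with hp'def
    have hp'W : p' ∈ W' :=
      ⟨hW, fun he => absurd he hab, fun _ => by simp [hp'def]⟩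
    have hpN : p' ∈ rint W' vN σ := by
      rw [hvNdef, hW'def, lift_rint hH hv σ]
      exact ⟨hp'W, hp⟩
    -- membership of σ at p' is insensitive to far loop recolourings
    have hagree : ∀ (vX : Fin m → Set ((U × ℤ) × (U × ℤ))),
        (vX = vA ∨ vX = vB) →
        ∀ i q, (q.1.2.natAbs ≤ d ∨ q.2.2.natAbs ≤ d) → (q ∈ vN i ↔ q ∈ vX i) := by
      intro vX hX i q hq
      have hqF : q ∉ Far := by
        rintro ⟨-, hqq, hlev⟩
        have h12 : q.1.2 = q.2.2 := by rw [hqq]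
        omega
      have hite : q ∉ (if i = i0 then Far else ∅) := by
        by_cases hi : i = i0
        · rw [if_pos hi]; exact hqF
        · rw [if_neg hi]; exact Set.notMem_empty q
      rcases hX with rfl | rfl
      · constructor
        · exact fun h => Or.inl h
        · intro h
          rcases h with h | h
          · exact h
          · exact absurd h hite
      · exact ⟨fun h => ⟨h, hite⟩, fun h => h.1⟩
    have hlevp' : p'.1.2.natAbs + dp σ ≤ d := by simp [hd, hp'def]
    have hlevp'' : p'.2.2.natAbs + dp σ ≤ d := by simp [hd, hp'def]
    have hpA : p' ∈ rint W' vA σ :=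
      (loc W d vN vA hvN hvA (hagree vA (Or.inl rfl)) σ p' hlevp' hlevp'').mp hpN
    have hpB : p' ∈ rint W' vB σ :=
      (loc W d vN vB hvN hvB (hagree vB (Or.inr rfl)) σ p' hlevp' hlevp'').mp hpN
    -- the distinguishing term
    set x0 : RTerm m := .var i0 with hx0def
    set φu : RTerm m := .mul .id (.neg x0) with hφudef
    set K := 2 * d + 4 with hK
    set L := 3 * d + 6 with hL
    set Ψ : RTerm m := .mul (.mul .id x0) (.neg (Aterm φu K)) with hΨdef
    set ρ : RTerm m := .comp .one (Aterm Ψ L) with hρdef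
    have hba : (b, a) ∈ W := hH.2 (by simp) _ _ hW
    have haa : (a, a) ∈ W := (hH.1 (by simp) _ _ hW).1
    have hbb : (b, b) ∈ W := (hH.1 (by simp) _ _ hW).2
    have hloopW : ∀ (e : U) (s : ℤ), (e, e) ∈ W →
        (((e, s), (e, s)) : (U × ℤ) × (U × ℤ)) ∈ W' :=
      fun e s he => ⟨he, fun _ => rfl, fun hne => absurd rfl hne⟩
    -- p' satisfies ρ in the model (W', vA)
    have hA_rho : p' ∈ rint W' vA ρ := by
      have htarget : ∀ e : U, (e = b ∨ e = a) →
          (((e, (0 : ℤ) + (L : ℕ)), (e, (0 : ℤ) + (L : ℕ))) : (U × ℤ) × (U × ℤ)) ∈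
            rint W' vA (Aterm Ψ 0) := by
        intro e he
        have hee : (e, e) ∈ W := by rcases he with rfl | rfl; exacts [hbb, haa]
        have hlp := hloopW e ((0 : ℤ) + (L : ℕ)) hee
        have hnat : ((0 : ℤ) + (L : ℕ)).natAbs = L := by simp
        have hFar : (((e, (0 : ℤ) + (L : ℕ)), (e, (0 : ℤ) + (L : ℕ))) :
            (U × ℤ) × (U × ℤ)) ∈ Far := by
          refine ⟨hlp, rfl, ?_⟩
          show d < ((0 : ℤ) + (L : ℕ)).natAbs
          omega
        have hx0A : (((e, (0 : ℤ) + (L : ℕ)), (e, (0 : ℤ) + (L : ℕ))) :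
            (U × ℤ) × (U × ℤ)) ∈ vN i0 ∪ (if i0 = i0 then Far else ∅) :=
          Or.inr (by rw [if_pos rfl]; exact hFar)
        refine ⟨⟨hlp, rfl⟩, ⟨⟨hlp, rfl⟩, hx0A⟩, hlp, ?_⟩
        -- no φu-loop within K
        intro hc
        obtain ⟨z, hz0, hzlev⟩ := A_elim_level vA K _ hc
        have hzlev' : ((0 : ℤ) + (L : ℕ)).natAbs ≤ z.2.natAbs + K := hzlev
        have hzfar : d < z.2.natAbs := by omega
        have hzW : ((z, z) : (U × ℤ) × (U × ℤ)) ∈ W' := (A_sub_id W' vA hz0).1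
        obtain ⟨-, -, -, hznot⟩ := hz0
        refine hznot ?_
        show (((z, z) : (U × ℤ) × (U × ℤ))) ∈ vN i0 ∪ (if i0 = i0 then Far else ∅)
        exact Or.inr (by rw [if_pos rfl]; exact ⟨hzW, rfl, hzfar⟩)
      have hAL : (((b, (0 : ℤ)), (b, (0 : ℤ))) : (U × ℤ) × (U × ℤ)) ∈
          rint W' vA (Aterm Ψ L) :=
        walkUp vA hH L b a 0 (Ne.symm hab) hba htarget
      exact ⟨hp'W, (b, (0 : ℤ)), hp'W, hAL⟩
    -- p' does not satisfy ρ in the model (W', vB)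
    have hB_rho : p' ∉ rint W' vB ρ := by
      rintro ⟨-, c, -, hc2⟩
      have hceq : c = (b, (0 : ℤ)) := (A_sub_id W' vB hc2).2
      subst hceq
      obtain ⟨z, hz0, hor⟩ := A_elim_nbr W' vB hH' L _ hc2
      have hzW : ((z, z) : (U × ℤ) × (U × ℤ)) ∈ W' := (A_sub_id W' vB hz0).1
      obtain ⟨-, hzΨ⟩ := hz0
      obtain ⟨⟨-, hzx0⟩, -, hznA⟩ := hzΨ
      have hzx0' : (z, z) ∈ vN i0 \ (if i0 = i0 then Far else ∅) := hzx0
      rw [if_pos rfl] at hzx0'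
      have hznear : z.2.natAbs ≤ d := by
        by_contra hcon
        exact hzx0'.2 ⟨hzW, rfl, show d < z.2.natAbs by omega⟩
      -- find a neighbour along a genuine edge
      have hedge : ∃ y : U, z.1 ≠ y ∧ (z.1, y) ∈ W := by
        rcases hor with rfl | ⟨y, hyne, hzy⟩
        · exact ⟨a, Ne.symm hab, hba⟩
        · have hbase : z.1 ≠ y.1 := by
            intro hc
            apply hyne
            have hlev := hzy.2.1 hc
            exact Prod.ext hc.symm hlev.symm
          exact ⟨y.1, hbase, hzy.1⟩
      obtain ⟨y, hzyne, hzyW⟩ := hedge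
      set j := ((d : ℤ) + 1 - z.2).toNat with hj
      have hjz : z.2 + (j : ℕ) = (d : ℤ) + 1 := by
        rw [hj]
        omega
      have htarget : ∀ e : U, (e = z.1 ∨ e = y) →
          (((e, z.2 + (j : ℕ)), (e, z.2 + (j : ℕ))) : (U × ℤ) × (U × ℤ)) ∈
            rint W' vB (Aterm φu 0) := by
        intro e he
        have hee : (e, e) ∈ W := by
          rcases he with rfl | rfl
          · exact (hH.1 (by simp) _ _ hzyW).1
          · exact (hH.1 (by simp) _ _ hzyW).2
        have hlp := hloopW e (z.2 + (j : ℕ)) hee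
        have hFar : (((e, z.2 + (j : ℕ)), (e, z.2 + (j : ℕ))) :
            (U × ℤ) × (U × ℤ)) ∈ Far := by
          refine ⟨hlp, rfl, ?_⟩
          show d < (z.2 + (j : ℕ)).natAbs
          omega
        refine ⟨⟨hlp, rfl⟩, ⟨hlp, rfl⟩, hlp, ?_⟩
        intro hcmem
        have hcmem' : (((e, z.2 + (j : ℕ)), (e, z.2 + (j : ℕ))) :
            (U × ℤ) × (U × ℤ)) ∈ vN i0 \ (if i0 = i0 then Far else ∅) := hcmem
        rw [if_pos rfl] at hcmem'
        exact hcmem'.2 hFar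
      have hwalk : ((z, z) : (U × ℤ) × (U × ℤ)) ∈ rint W' vB (Aterm φu j) := by
        have := walkUp vB hH j z.1 y z.2 hzyne hzyW htarget
        simpa using this
      have hjK : j ≤ K := by
        rw [hj, hK]
        omega
      exact hznA (A_le W' vB hjK hwalk)
    -- contradiction with atomhood
    rcases hdec ρ with hv1 | hv2
    · have heq := hv1 (U × ℤ) W' vA hH' hvA
      have : p' ∈ rint W' vA (σ.mul ρ) := ⟨hpA, hA_rho⟩
      rw [heq] at this
      exact this
    · have heq := hv2 (U × ℤ) W' vB hH' hvB
      have : p' ∈ rint W' vB (σ.mul (.neg ρ)) := ⟨hpB, hp'W, hB_rho⟩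
      rw [heq] at this
      exact this
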